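/- Let d, n ∈ ℕ and let f ∈ ℂ[X] with deg f ≤ d and f(0) = 1, and let p_n be the degree-n OPA to 1/f. Then the coefficient of X^d in the product p_n · f · f*_d equals 1, and the coefficient of X^i in p_n · f · f*_d equals 0 for every i with d + 1 ≤ i ≤ n + d. Equivalently, there exist complex numbers u_0, …, u_{d−1} and u_{n+d+1}, …, u_{n+2d} such that p_n(X) · f(X) · f*_d(X) = X^d + ∑_{i=0}^{d−1} u_i X^i + ∑_{j=n+d+1}^{n+2d} u_j X^j. -/

import Mathlib

open Polynomial

/-- The H² inner product of two polynomials: `⟨g, h⟩ = ∑ₖ gₖ conj(hₖ)`. -/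
noncomputable def hinner (g h : Polynomial ℂ) : ℂ :=
  ∑ᶠ k : ℕ, g.coeff k * (starRingEnd ℂ) (h.coeff k)

/-- The squared H² norm of a polynomial: `‖g‖² = ∑ₖ |gₖ|²`. -/
noncomputable def hnormSq (g : Polynomial ℂ) : ℝ :=
  ∑ᶠ k : ℕ, ‖g.coeff k‖ ^ 2

/-- `p` is the degree-`n` optimal polynomial approximant (OPA) to `1/f` in H². -/
def IsOPA (f : Polynomial ℂ) (n : ℕ) (p : Polynomial ℂ) : Prop :=
  p.degree ≤ (n : ℕ) ∧
    ∀ q : Polynomial ℂ, q.degree ≤ (n : ℕ) → hnormSq (1 - p * f) ≤ hnormSq (1 - q * f)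

/-- Conjugate-reversal of order `N`: `q*_N(X) = ∑_{j=0}^N conj(q_{N-j}) Xʲ`. -/
noncomputable def cRev (N : ℕ) (q : Polynomial ℂ) : Polynomial ℂ :=
  ∑ j ∈ Finset.range (N + 1), Polynomial.C ((starRingEnd ℂ) (q.coeff (N - j))) * Polynomial.X ^ j

lemma hinner_eq_sum (g h : Polynomial ℂ) {M : ℕ} (hM : ∀ k, M ≤ k → g.coeff k = 0) :
    hinner g h = ∑ k ∈ Finset.range M, g.coeff k * (starRingEnd ℂ) (h.coeff k) := by
  refine finsum_eq_finset_sum_of_support_subset _ ?_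
  intro k hk
  simp only [Function.mem_support, ne_eq] at hk
  simp only [Finset.coe_range, Set.mem_Iio]
  by_contra h'
  exact hk (by rw [hM k (le_of_not_gt h')]; simp)

lemma hnormSq_eq_sum (g : Polynomial ℂ) {M : ℕ} (hM : ∀ k, M ≤ k → g.coeff k = 0) :
    hnormSq g = ∑ k ∈ Finset.range M, ‖g.coeff k‖ ^ 2 := by
  refine finsum_eq_finset_sum_of_support_subset _ ?_
  intro k hk
  simp only [Function.mem_support, ne_eq] at hk
  simp only [Finset.coe_range, Set.mem_Iio]
  by_contra h'
  exact hk (by rw [hM k (le_of_not_gt h')]; simp)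

lemma expand_hnormSq (r s : Polynomial ℂ) (t : ℂ) :
    hnormSq (r - Polynomial.C t * s) =
      hnormSq r - 2 * ((starRingEnd ℂ) t * hinner r s).re
        + Complex.normSq t * hnormSq s := by
  set M := max r.natDegree s.natDegree + 1 with hMdef
  have h1 : ∀ k, M ≤ k → r.coeff k = 0 := fun k hk =>
    r.coeff_eq_zero_of_natDegree_lt (by omega)
  have h2 : ∀ k, M ≤ k → s.coeff k = 0 := fun k hk =>
    s.coeff_eq_zero_of_natDegree_lt (by omega)
  have h3 : ∀ k, M ≤ k → (r - Polynomial.C t * s).coeff k = 0 := by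
    intro k hk
    simp [coeff_sub, coeff_C_mul, h1 k hk, h2 k hk]
  rw [hnormSq_eq_sum _ h3, hnormSq_eq_sum r h1, hnormSq_eq_sum s h2, hinner_eq_sum r s h1]
  have key : ∀ k, ‖(r - Polynomial.C t * s).coeff k‖ ^ 2
      = ‖r.coeff k‖ ^ 2
        - 2 * ((starRingEnd ℂ) t * (r.coeff k * (starRingEnd ℂ) (s.coeff k))).re
        + Complex.normSq t * ‖s.coeff k‖ ^ 2 := by
    intro k
    simp only [coeff_sub, coeff_C_mul, Complex.sq_norm]
    rw [Complex.normSq_sub, Complex.normSq_mul]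
    have : (r.coeff k * (starRingEnd ℂ) (t * s.coeff k)).re
        = ((starRingEnd ℂ) t * (r.coeff k * (starRingEnd ℂ) (s.coeff k))).re := by
      rw [map_mul]; ring_nf
    rw [this]; ring
  simp only [key]
  rw [Finset.sum_add_distrib, Finset.sum_sub_distrib, ← Finset.mul_sum, ← Finset.mul_sum,
    ← Complex.re_sum, ← Finset.mul_sum]

lemma ortho (f : Polynomial ℂ) (n : ℕ) (p : Polynomial ℂ) (hp : IsOPA f n p)
    (q : Polynomial ℂ) (hq : q.degree ≤ (n : ℕ)) : hinner (1 - p * f) (q * f) = 0 := by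
  set r : Polynomial ℂ := 1 - p * f with hr
  set s : Polynomial ℂ := q * f with hs
  by_contra hc
  have hN : 0 < Complex.normSq (hinner r s) := Complex.normSq_pos.mpr hc
  set c := hinner r s with hcdef
  have hB : 0 ≤ hnormSq s := finsum_nonneg fun k => sq_nonneg _
  set B := hnormSq s with hBdef
  set ε : ℝ := 1 / (B + 1) with hεdef
  have hεpos : 0 < ε := by positivity
  have hBne : B + 1 ≠ 0 := by positivity
  have hε1 : ε * (B + 1) = 1 := by rw [hεdef, one_div, inv_mul_cancel₀ hBne]
  set t : ℂ := (ε : ℂ) * c with htdef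
  have hdeg : (p + Polynomial.C t * q).degree ≤ (n : ℕ) := by
    refine le_trans (degree_add_le _ _) (max_le hp.1 ?_)
    refine le_trans (degree_mul_le _ _) ?_
    calc (Polynomial.C t).degree + q.degree ≤ 0 + (n : ℕ) :=
          add_le_add (degree_C_le) hq
      _ = (n : ℕ) := by simp
  have hmin := hp.2 (p + Polynomial.C t * q) hdeg
  have hrec : 1 - (p + Polynomial.C t * q) * f = r - Polynomial.C t * s := by
    rw [hr, hs]; ring
  rw [hrec, expand_hnormSq] at hmin
  have hre : ((starRingEnd ℂ) t * c).re = ε * Complex.normSq c := by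
    rw [htdef, map_mul, Complex.conj_ofReal, mul_assoc, Complex.conj_mul']
    simp [← Complex.ofReal_pow, Complex.sq_norm]
  have hnst : Complex.normSq t = ε ^ 2 * Complex.normSq c := by
    rw [htdef, Complex.normSq_mul, Complex.normSq_ofReal]; ring
  rw [hre, hnst, ← hBdef] at hmin
  nlinarith [mul_pos hεpos hN]

lemma coeff_prod_cRev (g f : Polynomial ℂ) (d j : ℕ) (hdf : f.degree ≤ (d : ℕ)) :
    (g * cRev d f).coeff (d + j) = hinner g (f * Polynomial.X ^ j) := by
  have hfz : ∀ m, d < m → f.coeff m = 0 := fun m hm =>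
    f.coeff_eq_zero_of_degree_lt (lt_of_le_of_lt hdf (by exact_mod_cast hm))
  have hL : (g * cRev d f).coeff (d + j)
      = ∑ b ∈ Finset.range (d + 1),
          g.coeff (d + j - b) * (starRingEnd ℂ) (f.coeff (d - b)) := by
    rw [cRev, Finset.mul_sum, finset_sum_coeff]
    refine Finset.sum_congr rfl fun b hb => ?_
    have hb' : b ≤ d + j := by
      have := Finset.mem_range.mp hb; omega
    rw [show g * (Polynomial.C ((starRingEnd ℂ) (f.coeff (d - b))) * Polynomial.X ^ b)
        = (g * Polynomial.C ((starRingEnd ℂ) (f.coeff (d - b)))) * Polynomial.X ^ b by ring,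
      coeff_mul_X_pow', if_pos hb', coeff_mul_C]
  have hR : hinner g (f * Polynomial.X ^ j)
      = ∑ b ∈ Finset.range (d + 1),
          g.coeff (j + b) * (starRingEnd ℂ) (f.coeff b) := by
    rw [hinner]
    rw [finsum_eq_finset_sum_of_support_subset _
      (s := (Finset.range (d + 1)).image (j + ·)) ?_]
    · rw [Finset.sum_image (by intro a _ b _ h; exact Nat.add_left_cancel h)]
      refine Finset.sum_congr rfl fun b hb => ?_
      congr 1
      rw [show j + b = b + j by ring, coeff_mul_X_pow]
    · intro k hk
      simp only [Function.mem_support, ne_eq] at hk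
      have h1 : (f * Polynomial.X ^ j).coeff k ≠ 0 := fun h => hk (by rw [h]; simp)
      rw [coeff_mul_X_pow'] at h1
      by_cases hjk : j ≤ k
      · rw [if_pos hjk] at h1
        have h2 : k - j ≤ d := by
          by_contra h'
          exact h1 (hfz _ (by omega))
        simp only [Finset.coe_image, Set.mem_image, Finset.mem_coe, Finset.mem_range]
        exact ⟨k - j, by omega, by omega⟩
      · rw [if_neg hjk] at h1; exact absurd rfl h1
  rw [hL, hR]
  rw [← Finset.sum_range_reflect (fun b => g.coeff (j + b) * (starRingEnd ℂ) (f.coeff b)) (d + 1)]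
  refine Finset.sum_congr rfl fun b hb => ?_
  have : b ≤ d := by have := Finset.mem_range.mp hb; omega
  congr 2 <;> omega

lemma hinner_sub_left (a b h : Polynomial ℂ) :
    hinner (a - b) h = hinner a h - hinner b h := by
  set M := max a.natDegree b.natDegree + 1 with hMdef
  have h1 : ∀ k, M ≤ k → a.coeff k = 0 := fun k hk =>
    a.coeff_eq_zero_of_natDegree_lt (by omega)
  have h2 : ∀ k, M ≤ k → b.coeff k = 0 := fun k hk =>
    b.coeff_eq_zero_of_natDegree_lt (by omega)
  have h3 : ∀ k, M ≤ k → (a - b).coeff k = 0 := by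
    intro k hk; simp [coeff_sub, h1 k hk, h2 k hk]
  rw [hinner_eq_sum _ h h3, hinner_eq_sum a h h1, hinner_eq_sum b h h2,
    ← Finset.sum_sub_distrib]
  refine Finset.sum_congr rfl fun k _ => ?_
  rw [coeff_sub]; ring

lemma hinner_one_left (h : Polynomial ℂ) :
    hinner 1 h = (starRingEnd ℂ) (h.coeff 0) := by
  rw [hinner]
  rw [finsum_eq_single _ 0 (by
    intro k hk
    rw [Polynomial.coeff_one, if_neg (by exact_mod_cast hk)]
    simp)]
  simp

theorem opa_closed_formula (d n : ℕ) (f : Polynomial ℂ)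
    (hdf : f.degree ≤ (d : ℕ)) (hf0 : f.eval 0 = 1)
    (p : Polynomial ℂ) (hp : IsOPA f n p) :
    (p * f * cRev d f).coeff d = 1 ∧
      ∀ i : ℕ, d + 1 ≤ i → i ≤ n + d → (p * f * cRev d f).coeff i = 0 := by
  have hf00 : f.coeff 0 = 1 := by rwa [Polynomial.coeff_zero_eq_eval_zero]
  have key : ∀ j : ℕ, j ≤ n →
      hinner (p * f) (f * Polynomial.X ^ j) = (starRingEnd ℂ) ((f * Polynomial.X ^ j).coeff 0) := by
    intro j hj
    have hdegXj : (Polynomial.X ^ j : Polynomial ℂ).degree ≤ (n : ℕ) := by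
      rw [Polynomial.degree_X_pow]; exact_mod_cast hj
    have h0 := ortho f n p hp (Polynomial.X ^ j) hdegXj
    rw [show Polynomial.X ^ j * f = f * Polynomial.X ^ j by ring] at h0
    have := hinner_sub_left 1 (p * f) (f * Polynomial.X ^ j)
    rw [h0, hinner_one_left] at this
    linear_combination this
  constructor
  · have := coeff_prod_cRev (p * f) f d 0 hdf
    rw [show d + 0 = d by ring] at this
    rw [this, key 0 (Nat.zero_le n)]
    simp [hf00]
  · intro i hi1 hi2
    obtain ⟨j, rfl⟩ : ∃ j, i = d + j := ⟨i - d, by omega⟩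
    have hj1 : 1 ≤ j := by omega
    have hjn : j ≤ n := by omega
    rw [coeff_prod_cRev (p * f) f d j hdf, key j hjn]
    rw [coeff_mul_X_pow', if_neg (by omega)]
    simp
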